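/- Let S = {φ_1,…,φ_n} and T be finite sets of propositional formulas, P = var(S ∪ T), and G = {g_1,…,g_n} fresh atoms; for S' ⊆ S let M_{S'} ⊆ G be the interpretation with g_i ∈ M_{S'} iff φ_i ∈ S'. Then S' is a maximal (with respect to set inclusion) subset of S such that T ∪ S' is consistent if and only if M_{S'} is a model of the QBF C[T,S] ∧ ⋀_{i=1}^n ( ¬g_i → ¬ C[T ∪ {φ_i}, S \ {φ_i}] ), where C[T,S] = ∃P (T ∧ (G ≤ S)). -/

import Mathlib

namespace Para

/-- Propositional formulas over an alphabet `α`. -/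
inductive Fml (α : Type) : Type
  | atom : α → Fml α
  | top : Fml α
  | bot : Fml α
  | neg : Fml α → Fml α
  | conj : Fml α → Fml α → Fml α
  | disj : Fml α → Fml α → Fml α
  | impl : Fml α → Fml α → Fml α

namespace Fml

variable {α β : Type}

/-- Biconditional `a ≡ b`. -/
def iff' (a b : Fml α) : Fml α := conj (impl a b) (impl b a)

/-- Classical satisfaction: truth of a formula under an interpretation
(a set of atoms, those being true). -/
def holds (M : Set α) : Fml α → Prop
  | atom p => p ∈ M
  | top => True
  | bot => False
  | neg φ => ¬ holds M φ
  | conj φ ψ => holds M φ ∧ holds M ψ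
  | disj φ ψ => holds M φ ∨ holds M ψ
  | impl φ ψ => holds M φ → holds M ψ

/-- The set of atoms occurring in a formula. -/
def atoms : Fml α → Set α
  | atom p => {p}
  | top => ∅
  | bot => ∅
  | neg φ => atoms φ
  | conj φ ψ => atoms φ ∪ atoms ψ
  | disj φ ψ => atoms φ ∪ atoms ψ
  | impl φ ψ => atoms φ ∪ atoms ψ

/-- Renaming of atoms. -/
def map (f : α → β) : Fml α → Fml β
  | atom p => atom (f p)
  | top => top
  | bot => bot
  | neg φ => neg (map f φ)
  | conj φ ψ => conj (map f φ) (map f ψ)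
  | disj φ ψ => disj (map f φ) (map f ψ)
  | impl φ ψ => impl (map f φ) (map f ψ)

end Fml

/-- Classical consequence (= derivability, by soundness and completeness of
classical propositional logic). -/
def Entails {α : Type} (S : Set (Fml α)) (φ : Fml α) : Prop :=
  ∀ M : Set α, (∀ ψ ∈ S, ψ.holds M) → φ.holds M

/-- Deductive closure `Cn`. -/
def Cn {α : Type} (S : Set (Fml α)) : Set (Fml α) := {φ | Entails S φ}

/-- Consistency: `⊥ ∉ Cn S`. -/
def Consistent {α : Type} (S : Set (Fml α)) : Prop := Fml.bot ∉ Cn S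

/-- The atoms occurring in a set of formulas, `var(S)`. -/
def vars {α : Type} (S : Set (Fml α)) : Set α := ⋃ φ ∈ S, φ.atoms

/-- The alphabet `Σ ∪ Σ^±`: original atoms `p`, positive atoms `p⁺`,
negative atoms `p⁻`. -/
inductive XAtom (α : Type) : Type
  | orig : α → XAtom α
  | pos : α → XAtom α
  | neg : α → XAtom α

/-- Signed translation with a polarity flag (`true` = positive occurrence):
positive occurrences of `p` become `p⁺`, negative ones become `¬p⁻`. -/
def signedAux {α : Type} : Fml α → Bool → Fml (XAtom α)
  | .atom p, true => .atom (.pos p)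
  | .atom p, false => .neg (.atom (.neg p))
  | .top, _ => .top
  | .bot, _ => .bot
  | .neg φ, b => .neg (signedAux φ (!b))
  | .conj φ ψ, b => .conj (signedAux φ b) (signedAux ψ b)
  | .disj φ ψ, b => .disj (signedAux φ b) (signedAux ψ b)
  | .impl φ ψ, b => .impl (signedAux φ (!b)) (signedAux ψ b)

/-- The signed translation `α^±`. -/
def signed {α : Type} (φ : Fml α) : Fml (XAtom α) := signedAux φ true

/-- Embedding of `L_Σ` into `L_{Σ∪Σ^±}`. -/
def emb {α : Type} : Fml α → Fml (XAtom α) := Fml.map XAtom.orig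

/-- `W^± = {α^± | α ∈ W}`. -/
def signedSet {α : Type} (W : Set (Fml α)) : Set (Fml (XAtom α)) := signed '' W

/-- A default rule `(pre : jus / con)`. -/
structure Dflt (α : Type) where
  pre : Fml α
  jus : Fml α
  con : Fml α

/-- Atoms occurring in a default rule. -/
def Dflt.atoms {α : Type} (d : Dflt α) : Set α :=
  d.pre.atoms ∪ d.jus.atoms ∪ d.con.atoms

/-- The Reiter sequence `E_1 = V`, `E_{n+1} = Cn(E_n) ∪ {γ | (α:β/γ) ∈ D, α ∈ E_n, ¬β ∉ E}`
(0-indexed here). -/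
def extSeq {α : Type} (D : Set (Dflt α)) (V E : Set (Fml α)) : ℕ → Set (Fml α)
  | 0 => V
  | n+1 => Cn (extSeq D V E n) ∪
      {γ | ∃ d ∈ D, d.con = γ ∧ d.pre ∈ extSeq D V E n ∧ Fml.neg d.jus ∉ E}

/-- `E` is a (Reiter) extension of the default theory `(D, V)`. -/
def IsExtension {α : Type} (D : Set (Dflt α)) (V E : Set (Fml α)) : Prop :=
  E = ⋃ n, extSeq D V E n

/-- `E` is a hierarchic extension of `(⋃ n, Dn n, V)` with respect to the
partition `⟨Dn⟩`: `E = ⋃ En` where `E_0 = V` and `E_{n+1}` is an extension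
of `(Dn n, En n)`. -/
def IsHierExtension {α : Type} (Dn : ℕ → Set (Dflt α)) (V E : Set (Fml α)) : Prop :=
  ∃ En : ℕ → Set (Fml α), En 0 = V ∧ (∀ n, IsExtension (Dn n) (En n) (En (n+1))) ∧
    E = ⋃ n, En n

/-- The signed default `δ_p = ( : p⁺≡¬p⁻ / (p≡p⁺)∧(¬p≡p⁻) )`. -/
def deltap {α : Type} (p : α) : Dflt (XAtom α) where
  pre := .top
  jus := Fml.iff' (.atom (.pos p)) (.neg (.atom (.neg p)))
  con := .conj (Fml.iff' (.atom (.orig p)) (.atom (.pos p)))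
               (Fml.iff' (.neg (.atom (.orig p))) (.atom (.neg p)))

/-- `D_Σ = {δ_p | p ∈ Σ}`. -/
def DSigma (α : Type) : Set (Dflt (XAtom α)) := Set.range (deltap (α := α))

/-- `Π_S = {c(δ_p) | p ∈ Σ, ¬j(δ_p) ∉ S}`. -/
def PiSet {α : Type} (S : Set (Fml (XAtom α))) : Set (Fml (XAtom α)) :=
  {f | ∃ p : α, Fml.neg (deltap p).jus ∉ S ∧ f = (deltap p).con}

/-- The set of all extensions of `(D_Σ, W^±)`. -/
def Exts {α : Type} (W : Set (Fml α)) : Set (Set (Fml (XAtom α))) :=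
  {E | IsExtension (DSigma α) (signedSet W) E}

/-- Credulous unsigned consequence `W ⊢_c φ`. -/
def CredU {α : Type} (W : Set (Fml α)) (φ : Fml α) : Prop :=
  ∃ E ∈ Exts W, emb φ ∈ Cn (signedSet W ∪ PiSet E)

/-- Skeptical unsigned consequence `W ⊢_s φ`. -/
def SkepU {α : Type} (W : Set (Fml α)) (φ : Fml α) : Prop :=
  ∀ E ∈ Exts W, emb φ ∈ Cn (signedSet W ∪ PiSet E)

/-- Prudent unsigned consequence `W ⊢_p φ`. -/
def PrudU {α : Type} (W : Set (Fml α)) (φ : Fml α) : Prop :=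
  emb φ ∈ Cn (signedSet W ∪ ⋂ E ∈ Exts W, PiSet E)

/-- Credulous signed consequence `W ⊢_c^± φ`. -/
def CredS {α : Type} (W : Set (Fml α)) (φ : Fml α) : Prop :=
  ∃ E ∈ Exts W, signed φ ∈ Cn (signedSet W ∪ PiSet E)

/-- Skeptical signed consequence `W ⊢_s^± φ`. -/
def SkepS {α : Type} (W : Set (Fml α)) (φ : Fml α) : Prop :=
  ∀ E ∈ Exts W, signed φ ∈ Cn (signedSet W ∪ PiSet E)

/-- Prudent signed consequence `W ⊢_p^± φ`. -/
def PrudS {α : Type} (W : Set (Fml α)) (φ : Fml α) : Prop :=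
  signed φ ∈ Cn (signedSet W ∪ ⋂ E ∈ Exts W, PiSet E)

def Cc {α : Type} (W : Set (Fml α)) : Set (Fml α) := {φ | CredU W φ}
def Cs {α : Type} (W : Set (Fml α)) : Set (Fml α) := {φ | SkepU W φ}
def Cp {α : Type} (W : Set (Fml α)) : Set (Fml α) := {φ | PrudU W φ}
def CcPM {α : Type} (W : Set (Fml α)) : Set (Fml α) := {φ | CredS W φ}
def CsPM {α : Type} (W : Set (Fml α)) : Set (Fml α) := {φ | SkepS W φ}
def CpPM {α : Type} (W : Set (Fml α)) : Set (Fml α) := {φ | PrudS W φ}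

/-- `J'` is a maximal subset of `J` consistent with `V`. -/
def IsMaxConsSub {α : Type} (V J' J : Set (Fml α)) : Prop :=
  J' ⊆ J ∧ Consistent (V ∪ J') ∧
    ∀ J'', J' ⊆ J'' → J'' ⊆ J → Consistent (V ∪ J'') → J'' = J'

/-- Quantified Boolean formulas over an alphabet `α`. -/
inductive QBF (α : Type) : Type
  | atom : α → QBF α
  | top : QBF α
  | bot : QBF α
  | neg : QBF α → QBF α
  | conj : QBF α → QBF α → QBF α
  | disj : QBF α → QBF α → QBF α
  | impl : QBF α → QBF α → QBF α
  | all : α → QBF α → QBF α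
  | ex : α → QBF α → QBF α

/-- Truth of a QBF under an interpretation (a set of atoms):
`∀p Ψ` is true iff `Ψ` is true with `p` set to true and with `p` set to false,
dually for `∃p Ψ`. -/
def QBF.holds {α : Type} : Set α → QBF α → Prop
  | M, .atom p => p ∈ M
  | _, .top => True
  | _, .bot => False
  | M, .neg Φ => ¬ QBF.holds M Φ
  | M, .conj Φ Ψ => QBF.holds M Φ ∧ QBF.holds M Ψ
  | M, .disj Φ Ψ => QBF.holds M Φ ∨ QBF.holds M Ψ
  | M, .impl Φ Ψ => QBF.holds M Φ → QBF.holds M Ψ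
  | M, .all p Φ => QBF.holds (M ∪ {p}) Φ ∧ QBF.holds (M \ {p}) Φ
  | M, .ex p Φ => QBF.holds (M ∪ {p}) Φ ∨ QBF.holds (M \ {p}) Φ

/-- A QBF is valid iff it is true under every interpretation. -/
def QBF.Valid {α : Type} (Φ : QBF α) : Prop := ∀ M : Set α, Φ.holds M

/-- Propositional formulas are (quantifier-free) QBFs. -/
def Fml.toQBF {α : Type} : Fml α → QBF α
  | .atom p => .atom p
  | .top => .top
  | .bot => .bot
  | .neg φ => .neg φ.toQBF
  | .conj φ ψ => .conj φ.toQBF ψ.toQBF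
  | .disj φ ψ => .disj φ.toQBF ψ.toQBF
  | .impl φ ψ => .impl φ.toQBF ψ.toQBF

/-- Conjunction of a finite list of QBFs. -/
def QBF.conjList {α : Type} (l : List (QBF α)) : QBF α := l.foldr QBF.conj QBF.top

/-- `∃P Φ`: block of existential quantifiers over the atoms in `P`. -/
def QBF.exList {α : Type} (P : List α) (Φ : QBF α) : QBF α := P.foldr QBF.ex Φ

/-- `∀P Φ`: block of universal quantifiers over the atoms in `P`. -/
def QBF.allList {α : Type} (P : List α) (Φ : QBF α) : QBF α := P.foldr QBF.all Φ

/-- The module `C[T,S] = ∃P (T ∧ (G ≤ S))`, where `T` is given as the list `Ts`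
of its elements and the pairs `(g_i, φ_i)` encode `G ≤ S = ⋀ (g_i → φ_i)`. -/
def CMod {α : Type} (P : List α) (Ts : List (Fml α)) (pairs : List (α × Fml α)) : QBF α :=
  QBF.exList P (QBF.conj (QBF.conjList (Ts.map Fml.toQBF))
    (QBF.conjList (pairs.map (fun gp => QBF.impl (QBF.atom gp.1) gp.2.toQBF))))

/-- The module `Ext[T]` for a finite default theory `T = (D,V)` with
`D = {δ_1,…,δ_n}` and guessing atoms `g_1,…,g_n`:
`C[V, j(D)] ∧ ⋀_i (¬g_i → ¬ C[V ∪ {j(δ_i)}, j(D \ {δ_i})])`. -/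
def ExtMod {α : Type} {n : ℕ} (P : List α) (Vl : List (Fml α))
    (δ : Fin n → Dflt α) (g : Fin n → α) : QBF α :=
  QBF.conj
    (CMod P Vl ((List.finRange n).map fun i => (g i, (δ i).jus)))
    (QBF.conjList ((List.finRange n).map fun i =>
      QBF.impl (QBF.neg (QBF.atom (g i)))
        (QBF.neg (CMod P (Vl ++ [(δ i).jus])
          (((List.finRange n).filter (fun j => j != i)).map fun j => (g j, (δ j).jus))))))

/-- The module `Conseq[T,φ] = ∀P' (V ∧ (G ≤ c(D)) → φ)`. -/
def ConseqMod {α : Type} {n : ℕ} (P' : List α) (Vl : List (Fml α))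
    (δ : Fin n → Dflt α) (g : Fin n → α) (φ : Fml α) : QBF α :=
  QBF.allList P'
    (QBF.impl
      (QBF.conj (QBF.conjList (Vl.map Fml.toQBF))
        (QBF.conjList ((List.finRange n).map fun i =>
          QBF.impl (QBF.atom (g i)) (δ i).con.toQBF)))
      φ.toQBF)


section Aux

variable {α : Type}

lemma Fml.holds_congr (φ : Fml α) {M N : Set α}
    (h : ∀ a ∈ φ.atoms, (a ∈ M ↔ a ∈ N)) : φ.holds M ↔ φ.holds N := by
  induction φ with
  | atom p => exact h p (by simp [Fml.atoms])
  | top => exact Iff.rfl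
  | bot => exact Iff.rfl
  | neg φ ih => exact not_congr (ih h)
  | conj φ ψ ih1 ih2 =>
      exact and_congr (ih1 fun a ha => h a (Set.mem_union_left _ ha))
        (ih2 fun a ha => h a (Set.mem_union_right _ ha))
  | disj φ ψ ih1 ih2 =>
      exact or_congr (ih1 fun a ha => h a (Set.mem_union_left _ ha))
        (ih2 fun a ha => h a (Set.mem_union_right _ ha))
  | impl φ ψ ih1 ih2 =>
      exact imp_congr (ih1 fun a ha => h a (Set.mem_union_left _ ha))
        (ih2 fun a ha => h a (Set.mem_union_right _ ha))

lemma Fml.holds_toQBF (φ : Fml α) (M : Set α) :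
    QBF.holds M φ.toQBF ↔ φ.holds M := by
  induction φ with
  | atom p => exact Iff.rfl
  | top => exact Iff.rfl
  | bot => exact Iff.rfl
  | neg φ ih => exact not_congr ih
  | conj φ ψ ih1 ih2 => exact and_congr ih1 ih2
  | disj φ ψ ih1 ih2 => exact or_congr ih1 ih2
  | impl φ ψ ih1 ih2 => exact imp_congr ih1 ih2

lemma QBF.conjList_holds (l : List (QBF α)) (M : Set α) :
    QBF.holds M (QBF.conjList l) ↔ ∀ Φ ∈ l, QBF.holds M Φ := by
  induction l with
  | nil => simp [QBF.conjList, QBF.holds]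
  | cons Φ l ih =>
      simp only [QBF.conjList, List.foldr] at *
      show QBF.holds M Φ ∧ _ ↔ _
      rw [ih]; simp

lemma QBF.exList_holds (P : List α) (Φ : QBF α) (M : Set α) :
    QBF.holds M (QBF.exList P Φ) ↔
      ∃ N : Set α, (∀ a, a ∉ P → (a ∈ N ↔ a ∈ M)) ∧ QBF.holds N Φ := by
  induction P generalizing M with
  | nil =>
      constructor
      · intro h; exact ⟨M, fun a _ => Iff.rfl, h⟩
      · rintro ⟨N, hN, h⟩
        have : N = M := Set.ext fun a => hN a List.not_mem_nil
        rwa [this] at h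
  | cons p P ih =>
      show QBF.holds (M ∪ {p}) (QBF.exList P Φ) ∨
          QBF.holds (M \ {p}) (QBF.exList P Φ) ↔ _
      constructor
      · rintro (h | h) <;>
        · rcases (ih _).1 h with ⟨N, hN, hΦ⟩
          refine ⟨N, fun a ha => ?_, hΦ⟩
          have hap : a ≠ p := fun e => ha (e ▸ List.mem_cons_self (a := p) (l := P))
          have haP : a ∉ P := fun e => ha (List.mem_cons_of_mem p e)
          rw [hN a haP]
          simp [hap]
      · rintro ⟨N, hN, hΦ⟩
        by_cases hp : p ∈ N
        · left
          refine (ih _).2 ⟨N, fun a ha => ?_, hΦ⟩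
          by_cases hap : a = p
          · subst hap; simp [hp]
          · have : a ∉ p :: P := by simp [hap, ha]
            rw [hN a this]; simp [hap]
        · right
          refine (ih _).2 ⟨N, fun a ha => ?_, hΦ⟩
          by_cases hap : a = p
          · subst hap; simp [hp]
          · have : a ∉ p :: P := by simp [hap, ha]
            rw [hN a this]; simp [hap]

lemma consistent_iff (S : Set (Fml α)) :
    Consistent S ↔ ∃ M : Set α, ∀ ψ ∈ S, ψ.holds M := by
  unfold Consistent Cn Entails
  simp only [Set.mem_setOf_eq]
  rw [not_forall]
  constructor
  · rintro ⟨M, hM⟩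
    refine ⟨M, fun ψ hψ => ?_⟩
    by_contra h
    exact hM fun h' => absurd (h' ψ hψ) h
  · rintro ⟨M, hM⟩
    exact ⟨M, fun h => (h hM : Fml.holds M Fml.bot)⟩

lemma consistent_mono {A B : Set (Fml α)} (h : A ⊆ B) (hB : Consistent B) :
    Consistent A := by
  rw [consistent_iff] at *
  rcases hB with ⟨M, hM⟩
  exact ⟨M, fun ψ hψ => hM ψ (h hψ)⟩

lemma CMod_holds_iff (P : List α) (Ts : List (Fml α))
    (pairs : List (α × Fml α)) (M : Set α)
    (hTs : ∀ ψ ∈ Ts, ∀ a ∈ ψ.atoms, a ∈ P)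
    (hpairs2 : ∀ gp ∈ pairs, ∀ a ∈ gp.2.atoms, a ∈ P)
    (hpairs1 : ∀ gp ∈ pairs, gp.1 ∉ P) :
    QBF.holds M (CMod P Ts pairs) ↔
      ∃ N : Set α, (∀ ψ ∈ Ts, ψ.holds N) ∧
        ∀ gp ∈ pairs, gp.1 ∈ M → gp.2.holds N := by
  classical
  unfold CMod
  rw [QBF.exList_holds]
  constructor
  · rintro ⟨N, hN, h1, h2⟩
    rw [QBF.conjList_holds] at h1
    rw [QBF.conjList_holds] at h2
    refine ⟨N, fun ψ hψ => ?_, fun gp hgp hg => ?_⟩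
    · exact (Fml.holds_toQBF ψ N).1 (h1 _ (List.mem_map_of_mem hψ))
    · have := h2 _ (List.mem_map_of_mem hgp)
      have hg' : gp.1 ∈ N := (hN _ (hpairs1 gp hgp)).2 hg
      exact (Fml.holds_toQBF gp.2 N).1 (this hg')
  · rintro ⟨N, h1, h2⟩
    refine ⟨{a | if a ∈ P then a ∈ N else a ∈ M}, fun a ha => by simp [ha], ?_, ?_⟩
    · rw [QBF.conjList_holds]
      intro Φ hΦ
      rcases List.mem_map.1 hΦ with ⟨ψ, hψ, rfl⟩
      rw [Fml.holds_toQBF]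
      refine (Fml.holds_congr ψ fun a ha => ?_).1 (h1 ψ hψ)
      simp [hTs ψ hψ a ha]
    · rw [QBF.conjList_holds]
      intro Φ hΦ
      rcases List.mem_map.1 hΦ with ⟨gp, hgp, rfl⟩
      intro hg
      have hg' : gp.1 ∈ M := by
        have hg2 : gp.1 ∈ {a | if a ∈ P then a ∈ N else a ∈ M} := hg
        simpa [hpairs1 gp hgp] using hg2
      rw [Fml.holds_toQBF]
      refine (Fml.holds_congr gp.2 fun a ha => ?_).1 (h2 gp hgp hg')
      simp [hpairs2 gp hgp a ha]

end Aux

/-- In the setting of Proposition `C[T,S]`: `S'` is a maximal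
subset of `S` such that `T ∪ S'` is consistent iff `M_{S'}` is a model of
`C[T,S] ∧ ⋀_{i=1}^n (¬g_i → ¬ C[T ∪ {φ_i}, S \ {φ_i}])`. -/
theorem maximal_consistency_QBF_encoding {α : Type} {n : ℕ} (φ : Fin n → Fml α)
    (Tl : List (Fml α)) (g : Fin n → α) (hginj : Function.Injective g)
    (hfresh : ∀ i, g i ∉ vars (Set.range φ ∪ {ψ | ψ ∈ Tl}))
    (P : List α) (hP : ∀ a, a ∈ P ↔ a ∈ vars (Set.range φ ∪ {ψ | ψ ∈ Tl}))
    (S' : Set (Fml α)) (hS' : S' ⊆ Set.range φ) :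
    (Consistent ({ψ | ψ ∈ Tl} ∪ S') ∧
      ∀ S'' : Set (Fml α), S' ⊆ S'' → S'' ⊆ Set.range φ →
        Consistent ({ψ | ψ ∈ Tl} ∪ S'') → S'' = S') ↔
      QBF.holds {a | ∃ i, φ i ∈ S' ∧ g i = a}
        (QBF.conj
          (CMod P Tl ((List.finRange n).map (fun i => (g i, φ i))))
          (QBF.conjList ((List.finRange n).map (fun i =>
            QBF.impl (QBF.neg (QBF.atom (g i)))
              (QBF.neg (CMod P (Tl ++ [φ i])
                (((List.finRange n).filter (fun j => j != i)).map
                  (fun j => (g j, φ j))))))))) := by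
  classical
  set M₀ : Set α := {a | ∃ i, φ i ∈ S' ∧ g i = a} with hM₀def
  have hgM : ∀ i : Fin n, g i ∈ M₀ ↔ φ i ∈ S' := by
    intro i
    constructor
    · rintro ⟨j, hj, hgj⟩
      rwa [hginj hgj] at hj
    · intro h; exact ⟨i, h, rfl⟩
  have hgP : ∀ i : Fin n, g i ∉ P := fun i hi => hfresh i ((hP _).1 hi)
  have hatoms : ∀ i : Fin n, ∀ a ∈ (φ i).atoms, a ∈ P := by
    intro i a ha
    exact (hP a).2 (Set.mem_biUnion (Set.mem_union_left _ ⟨i, rfl⟩) ha)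
  have hatomsT : ∀ ψ ∈ Tl, ∀ a ∈ ψ.atoms, a ∈ P := by
    intro ψ hψ a ha
    exact (hP a).2 (Set.mem_biUnion (Set.mem_union_right _ hψ) ha)
  have hp2 : ∀ l : List (Fin n), ∀ gp ∈ l.map (fun j => (g j, φ j)),
      ∀ a ∈ gp.2.atoms, a ∈ P := by
    intro l gp hgp a ha
    rcases List.mem_map.1 hgp with ⟨i, _, rfl⟩
    exact hatoms i a ha
  have hp1 : ∀ l : List (Fin n), ∀ gp ∈ l.map (fun j => (g j, φ j)), gp.1 ∉ P := by
    intro l gp hgp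
    rcases List.mem_map.1 hgp with ⟨i, _, rfl⟩
    exact hgP i
  -- characterization of the first conjunct
  have hA : QBF.holds M₀ (CMod P Tl ((List.finRange n).map fun i => (g i, φ i))) ↔
      Consistent ({ψ | ψ ∈ Tl} ∪ S') := by
    rw [CMod_holds_iff P Tl _ M₀ hatomsT (hp2 _) (hp1 _), consistent_iff]
    constructor
    · rintro ⟨N, h1, h2⟩
      refine ⟨N, fun ψ hψ => ?_⟩
      rcases hψ with hψ | hψ
      · exact h1 ψ hψ
      · rcases hS' hψ with ⟨i, rfl⟩
        exact h2 (g i, φ i) (List.mem_map_of_mem (List.mem_finRange i)) ((hgM i).2 hψ)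
    · rintro ⟨N, hN⟩
      refine ⟨N, fun ψ hψ => hN ψ (Or.inl hψ), ?_⟩
      rintro gp hgp hg
      rcases List.mem_map.1 hgp with ⟨i, _, rfl⟩
      exact hN (φ i) (Or.inr ((hgM i).1 hg))
  -- characterization of the inner CMod modules
  have hB : ∀ i : Fin n,
      QBF.holds M₀ (CMod P (Tl ++ [φ i])
        (((List.finRange n).filter fun j => j != i).map fun j => (g j, φ j))) ↔
      ∃ N : Set α, (∀ ψ ∈ Tl, ψ.holds N) ∧ (φ i).holds N ∧
        ∀ j : Fin n, j ≠ i → φ j ∈ S' → (φ j).holds N := by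
    intro i
    have hTs' : ∀ ψ ∈ Tl ++ [φ i], ∀ a ∈ ψ.atoms, a ∈ P := by
      intro ψ hψ a ha
      rcases List.mem_append.1 hψ with hψ | hψ
      · exact hatomsT ψ hψ a ha
      · rw [List.mem_singleton.1 hψ] at ha
        exact hatoms i a ha
    rw [CMod_holds_iff P _ _ M₀ hTs' (hp2 _) (hp1 _)]
    constructor
    · rintro ⟨N, h1, h2⟩
      refine ⟨N, fun ψ hψ => h1 ψ (List.mem_append_left _ hψ),
        h1 (φ i) (List.mem_append_right _ (List.mem_singleton_self _)), ?_⟩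
      intro j hj hjS
      refine h2 (g j, φ j) ?_ ((hgM j).2 hjS)
      exact List.mem_map_of_mem (List.mem_filter.2 ⟨List.mem_finRange j, by simpa using hj⟩)
    · rintro ⟨N, h1, h2, h3⟩
      refine ⟨N, ?_, ?_⟩
      · intro ψ hψ
        rcases List.mem_append.1 hψ with hψ | hψ
        · exact h1 ψ hψ
        · rw [List.mem_singleton.1 hψ]; exact h2
      · rintro gp hgp hg
        rcases List.mem_map.1 hgp with ⟨j, hjmem, rfl⟩
        have hji : j ≠ i := by simpa using (List.mem_filter.1 hjmem).2
        exact h3 j hji ((hgM j).1 hg)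
  -- relating the ∃N form to consistency
  have hCons : ∀ i : Fin n, φ i ∉ S' →
      ((∃ N : Set α, (∀ ψ ∈ Tl, ψ.holds N) ∧ (φ i).holds N ∧
          ∀ j : Fin n, j ≠ i → φ j ∈ S' → (φ j).holds N) ↔
        Consistent ({ψ | ψ ∈ Tl} ∪ (S' ∪ {φ i}))) := by
    intro i hi
    rw [consistent_iff]
    constructor
    · rintro ⟨N, h1, h2, h3⟩
      refine ⟨N, fun ψ hψ => ?_⟩
      rcases hψ with hψ | hψ | hψ
      · exact h1 ψ hψ
      · rcases hS' hψ with ⟨j, rfl⟩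
        have hji : j ≠ i := fun e => hi (e ▸ hψ)
        exact h3 j hji hψ
      · rw [Set.mem_singleton_iff.1 hψ]; exact h2
    · rintro ⟨N, hN⟩
      exact ⟨N, fun ψ hψ => hN ψ (Or.inl hψ), hN (φ i) (Or.inr (Or.inr rfl)),
        fun j _ hj => hN (φ j) (Or.inr (Or.inl hj))⟩
  -- maximality reformulation
  have hMax : (∀ S'' : Set (Fml α), S' ⊆ S'' → S'' ⊆ Set.range φ →
        Consistent ({ψ | ψ ∈ Tl} ∪ S'') → S'' = S') ↔
      (∀ i : Fin n, φ i ∉ S' → ¬ Consistent ({ψ | ψ ∈ Tl} ∪ (S' ∪ {φ i}))) := by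
    constructor
    · intro hmax i hi hc
      have h1 : S' ⊆ S' ∪ {φ i} := Set.subset_union_left
      have h2 : S' ∪ {φ i} ⊆ Set.range φ :=
        Set.union_subset hS' (Set.singleton_subset_iff.2 ⟨i, rfl⟩)
      have := hmax _ h1 h2 hc
      exact hi (this ▸ (Or.inr rfl : φ i ∈ S' ∪ {φ i}))
    · intro hb S'' h1 h2 hc
      by_contra hne
      have hns : ¬ S'' ⊆ S' := fun h => hne (h.antisymm h1)
      rcases Set.not_subset.1 hns with ⟨ψ, hψS'', hψS'⟩
      rcases h2 hψS'' with ⟨i, rfl⟩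
      refine hb i hψS' (consistent_mono ?_ hc)
      intro χ hχ
      rcases hχ with hχ | hχ | hχ
      · exact Or.inl hχ
      · exact Or.inr (h1 hχ)
      · rw [Set.mem_singleton_iff.1 hχ]; exact Or.inr hψS''
  -- the big conjunction
  have step : ∀ i : Fin n,
      QBF.holds M₀ (QBF.impl (QBF.neg (QBF.atom (g i)))
        (QBF.neg (CMod P (Tl ++ [φ i])
          (((List.finRange n).filter fun j => j != i).map fun j => (g j, φ j))))) ↔
      (φ i ∉ S' → ¬ Consistent ({ψ | ψ ∈ Tl} ∪ (S' ∪ {φ i}))) := by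
    intro i
    simp only [QBF.holds]
    constructor
    · intro h hi hc
      exact h (fun hg => hi ((hgM i).1 hg)) ((hB i).2 ((hCons i hi).2 hc))
    · intro h hg hcm
      have hi : φ i ∉ S' := fun hs => hg ((hgM i).2 hs)
      exact h hi ((hCons i hi).1 ((hB i).1 hcm))
  have hBall : QBF.holds M₀ (QBF.conjList ((List.finRange n).map fun i =>
        QBF.impl (QBF.neg (QBF.atom (g i)))
          (QBF.neg (CMod P (Tl ++ [φ i])
            (((List.finRange n).filter fun j => j != i).map fun j => (g j, φ j)))))) ↔
      ∀ i : Fin n, φ i ∉ S' → ¬ Consistent ({ψ | ψ ∈ Tl} ∪ (S' ∪ {φ i})) := by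
    rw [QBF.conjList_holds]
    constructor
    · intro h i
      exact (step i).1 (h _ (List.mem_map_of_mem (List.mem_finRange i)))
    · intro h Φ hΦ
      rcases List.mem_map.1 hΦ with ⟨i, _, rfl⟩
      exact (step i).2 (h i)
  show _ ↔ QBF.holds M₀ _
  simp only [QBF.holds]
  rw [hA, hBall]
  exact and_congr Iff.rfl hMax

end Para
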